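/- arXiv:1008.3145 — 2 statements merged into one kernel-verified Lean document; each statement's English description precedes it below -/
import Mathlib

section
/- Let φ be an L-formula with n free variables. Every open subset of ⟦φ⟧ that is stable under the action θ_φ is a union of definable subsets, i.e. a union of sets of the form ⟦ξ⟧ for L-formulas ξ with n free variables such that every M ∈ X_T satisfies ∀x⃗ (ξ(x⃗) → φ(x⃗)). -/
open FirstOrder FirstOrder.Language Set Topology

universe u v w x

variable {L : FirstOrder.Language.{u, v}} {α : Type w}

/-- A model of `T` whose carrier is a subset of `α`: an element of the set `X_T` of
small models of `T`. -/
structure SmallModel (L : FirstOrder.Language.{u, v}) (α : Type w) (T : L.Theory) where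
  carrier : Set α
  struc : L.Structure carrier
  models : @FirstOrder.Language.Theory.Model L carrier struc T

/-- `M.Sat φ v` means that the formula `φ` is realized in the small model `M`
at the valuation `v`. -/
def SmallModel.Sat {T : L.Theory} (M : SmallModel L α T) {ι : Type*}
    (φ : L.Formula ι) (v : ι → M.carrier) : Prop :=
  letI := M.struc
  φ.Realize v

/-- The basic open set `⟨φ, b⟩ ⊆ X_T`. -/
def XBasic {T : L.Theory} {n : ℕ} (φ : L.Formula (Fin n)) (b : Fin n → α) :
    Set (SmallModel L α T) :=
  {M | ∃ h : ∀ i, b i ∈ M.carrier, M.Sat φ fun i => ⟨b i, h i⟩}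

/-- The logical topology on `X_T`, generated by the sets `⟨φ, b⟩`. -/
instance SmallModel.instTopologicalSpace {T : L.Theory} :
    TopologicalSpace (SmallModel L α T) :=
  TopologicalSpace.generateFrom
    {U | ∃ (n : ℕ) (φ : L.Formula (Fin n)) (b : Fin n → α), U = XBasic φ b}

/-- A point of the sheaf `⟦φ⟧`: a model `M ∈ X_T` together with a tuple from its carrier
realizing `φ`. -/
structure SheafPt {L : FirstOrder.Language.{u, v}} {α : Type w} (T : L.Theory)
    {n : ℕ} (φ : L.Formula (Fin n)) where
  model : SmallModel L α T
  elem : Fin n → model.carrier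
  sat : model.Sat φ elem

/-- The basic open set `⟨ψ, b⟩ ⊆ ⟦φ⟧`. -/
def sheafBasic {T : L.Theory} {n : ℕ} (φ : L.Formula (Fin n)) {m : ℕ}
    (ψ : L.Formula (Fin n ⊕ Fin m)) (b : Fin m → α) :
    Set (SheafPt (α := α) T φ) :=
  {p | ∃ h : ∀ i, b i ∈ p.model.carrier,
        p.model.Sat ψ (Sum.elim p.elem fun i => ⟨b i, h i⟩)}

/-- The logical topology on `⟦φ⟧`, generated by the sets `⟨ψ, b⟩`. -/
instance SheafPt.instTopologicalSpace {T : L.Theory} {n : ℕ} (φ : L.Formula (Fin n)) :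
    TopologicalSpace (SheafPt (α := α) T φ) :=
  TopologicalSpace.generateFrom
    {U | ∃ (m : ℕ) (ψ : L.Formula (Fin n ⊕ Fin m)) (b : Fin m → α), U = sheafBasic φ ψ b}

/-- Isomorphisms of `L`-structures between two small models. -/
abbrev StrEquiv {T : L.Theory} (A B : SmallModel L α T) : Type _ :=
  @FirstOrder.Language.Equiv L A.carrier B.carrier A.struc B.struc

/-- The underlying function of an isomorphism of small models. -/
def StrEquiv.fn {T : L.Theory} {A B : SmallModel L α T} (f : StrEquiv A B) :
    A.carrier → B.carrier :=
  (@FirstOrder.Language.Equiv.toEquiv L A.carrier B.carrier A.struc B.struc f)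

/-- Composition of isomorphisms of small models. -/
def StrEquiv.comp {T : L.Theory} {A B C : SmallModel L α T}
    (g : StrEquiv B C) (f : StrEquiv A B) : StrEquiv A C :=
  letI := A.struc; letI := B.struc; letI := C.struc
  FirstOrder.Language.Equiv.comp g f

/-- An element of `G_T`: a triple `(M, N, f)` with `M, N ∈ X_T` and `f : M ≅ N` an
isomorphism of `L`-structures. -/
structure ModelIso (L : FirstOrder.Language.{u, v}) (α : Type w) (T : L.Theory) where
  src : SmallModel L α T
  tgt : SmallModel L α T
  iso : StrEquiv src tgt

/-- The basic open set `⟨a ↦ b⟩ ⊆ G_T`. -/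
def GMapsTo {T : L.Theory} (a b : α) : Set (ModelIso L α T) :=
  {g | ∃ h : a ∈ g.src.carrier, (StrEquiv.fn g.iso ⟨a, h⟩ : α) = b}

/-- The logical topology on `G_T`, generated by the sets `s⁻¹⟨φ, b⟩`, `t⁻¹⟨φ, b⟩` and
`⟨a ↦ b⟩`. -/
instance ModelIso.instTopologicalSpace {T : L.Theory} :
    TopologicalSpace (ModelIso L α T) :=
  TopologicalSpace.generateFrom
    ({U | ∃ (n : ℕ) (φ : L.Formula (Fin n)) (b : Fin n → α),
        U = ModelIso.src ⁻¹' XBasic φ b} ∪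
     {U | ∃ (n : ℕ) (φ : L.Formula (Fin n)) (b : Fin n → α),
        U = ModelIso.tgt ⁻¹' XBasic φ b} ∪
     {U | ∃ a b : α, U = GMapsTo (T := T) a b})

/-- The identity arrow of `G_T` at a model `M`. -/
def ModelIso.idIso {T : L.Theory} (M : SmallModel L α T) : ModelIso L α T :=
  ⟨M, M, letI := M.struc; FirstOrder.Language.Equiv.refl L M.carrier⟩

/-- The inverse of an arrow of `G_T`. -/
def ModelIso.invIso {T : L.Theory} (g : ModelIso L α T) : ModelIso L α T :=
  ⟨g.tgt, g.src, letI := g.src.struc; letI := g.tgt.struc;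
    FirstOrder.Language.Equiv.symm g.iso⟩

/-- An element of `G_T ×_{X_T} ⟦φ⟧`: an arrow `(M,N,f)` of `G_T` together with a point
`(M, a⃗)` of `⟦φ⟧` lying over its source. -/
structure ActionPt {L : FirstOrder.Language.{u, v}} {α : Type w} (T : L.Theory)
    {n : ℕ} (φ : L.Formula (Fin n)) where
  g : ModelIso L α T
  elem : Fin n → g.src.carrier
  sat : g.src.Sat φ elem

/-- The point of `⟦φ⟧` over the source of the arrow. -/
def ActionPt.pt {T : L.Theory} {n : ℕ} {φ : L.Formula (Fin n)}
    (q : ActionPt (α := α) T φ) : SheafPt (α := α) T φ :=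
  ⟨q.g.src, q.elem, q.sat⟩

/-- `G_T ×_{X_T} ⟦φ⟧` is topologized as a subspace of the product `G_T × ⟦φ⟧`. -/
instance ActionPt.instTopologicalSpace {T : L.Theory} {n : ℕ} {φ : L.Formula (Fin n)} :
    TopologicalSpace (ActionPt (α := α) T φ) :=
  TopologicalSpace.induced (fun q => (q.g, q.pt)) inferInstance

/-- The action `θ_φ : G_T ×_{X_T} ⟦φ⟧ → ⟦φ⟧`, `θ_φ((M,N,f), (M, a⃗)) = (N, f(a⃗))`. -/
def theta {T : L.Theory} {n : ℕ} (φ : L.Formula (Fin n))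
    (q : ActionPt (α := α) T φ) : SheafPt (α := α) T φ where
  model := q.g.tgt
  elem := fun i => StrEquiv.fn q.g.iso (q.elem i)
  sat := by
    letI := q.g.src.struc
    letI := q.g.tgt.struc
    have h := q.sat
    have heq : (fun i => StrEquiv.fn q.g.iso (q.elem i)) = ⇑q.g.iso ∘ q.elem := rfl
    show Formula.Realize (M := q.g.tgt.carrier) φ _
    rw [heq]
    exact (StrongHomClass.realize_formula q.g.iso φ).mpr h

/-- The definable subset `⟦ξ⟧ ⊆ ⟦φ⟧` given by a formula `ξ`. -/
def defSub {T : L.Theory} {n : ℕ} (φ ξ : L.Formula (Fin n)) :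
    Set (SheafPt (α := α) T φ) :=
  {p | p.model.Sat ξ p.elem}

section Helpers

open Cardinal

variable {T : L.Theory} {n : ℕ}

lemma SmallModel.sat_iff {M : SmallModel L α T} {ι : Type*} {φ : L.Formula ι}
    {v : ι → M.carrier} :
    M.Sat φ v ↔ @FirstOrder.Language.Formula.Realize L _ M.struc _ φ v := Iff.rfl

lemma SheafPt.ext' {φ : L.Formula (Fin n)} {p q : SheafPt (α := α) T φ}
    (hm : p.model = q.model) (he : ∀ i, ((p.elem i : α)) = (q.elem i : α)) : p = q := by
  obtain ⟨Mp, ep, sp⟩ := p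
  obtain ⟨Mq, eq', sq⟩ := q
  cases hm
  obtain rfl : ep = eq' := funext fun i => Subtype.ext (he i)
  rfl

lemma mem_of_theta_mem {φ : L.Formula (Fin n)} {U : Set (SheafPt (α := α) T φ)}
    (hstable : ∀ q : ActionPt (α := α) T φ, q.pt ∈ U → theta φ q ∈ U)
    (q : ActionPt (α := α) T φ) (h : theta φ q ∈ U) : q.pt ∈ U := by
  let q' : ActionPt (α := α) T φ := ⟨q.g.invIso, (theta φ q).elem, (theta φ q).sat⟩
  have h1 : q'.pt = theta φ q := rfl
  have h2 := hstable q' (h1 ▸ h)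
  have h3 : theta φ q' = q.pt := by
    refine SheafPt.ext' rfl fun i => ?_
    show ((StrEquiv.fn q.g.invIso.iso (StrEquiv.fn q.g.iso (q.elem i)) : q.g.src.carrier) : α)
      = (q.elem i : α)
    letI := q.g.src.struc
    letI := q.g.tgt.struc
    exact congrArg Subtype.val (q.g.iso.symm_apply_apply (q.elem i))
  rwa [h3] at h2

/-- Combining two basic open subsets of `⟦φ⟧` into one. -/
lemma sheafBasic_inter {φ : L.Formula (Fin n)} {m₁ m₂ : ℕ}
    (ψ₁ : L.Formula (Fin n ⊕ Fin m₁)) (ψ₂ : L.Formula (Fin n ⊕ Fin m₂))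
    (b₁ : Fin m₁ → α) (b₂ : Fin m₂ → α) :
    sheafBasic (T := T) φ
      ((ψ₁.relabel (Sum.map id (Fin.castAdd m₂))) ⊓ (ψ₂.relabel (Sum.map id (Fin.natAdd m₁))))
      (Fin.append b₁ b₂)
    = sheafBasic φ ψ₁ b₁ ∩ sheafBasic φ ψ₂ b₂ := by
  ext p
  letI := p.model.struc
  constructor
  · rintro ⟨h, hs⟩
    rw [SmallModel.sat_iff, Formula.realize_inf, Formula.realize_relabel,
      Formula.realize_relabel] at hs
    obtain ⟨hs₁, hs₂⟩ := hs
    have h₁ : ∀ i, b₁ i ∈ p.model.carrier := fun i => by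
      have := h (Fin.castAdd m₂ i); rwa [Fin.append_left] at this
    have h₂ : ∀ i, b₂ i ∈ p.model.carrier := fun i => by
      have := h (Fin.natAdd m₁ i); rwa [Fin.append_right] at this
    refine ⟨⟨h₁, ?_⟩, ⟨h₂, ?_⟩⟩
    · rw [SmallModel.sat_iff]
      convert hs₁ using 1
      funext a
      rcases a with a | i
      · rfl
      · exact Subtype.ext (Fin.append_left b₁ b₂ i).symm
    · rw [SmallModel.sat_iff]
      convert hs₂ using 1
      funext a
      rcases a with a | i
      · rfl
      · exact Subtype.ext (Fin.append_right b₁ b₂ i).symm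
  · rintro ⟨⟨h₁, hs₁⟩, ⟨h₂, hs₂⟩⟩
    have h : ∀ i, Fin.append b₁ b₂ i ∈ p.model.carrier := fun i => by
      refine Fin.addCases (fun j => ?_) (fun j => ?_) i
      · rw [Fin.append_left]; exact h₁ j
      · rw [Fin.append_right]; exact h₂ j
    refine ⟨h, ?_⟩
    rw [SmallModel.sat_iff, Formula.realize_inf, Formula.realize_relabel,
      Formula.realize_relabel]
    rw [SmallModel.sat_iff] at hs₁ hs₂
    constructor
    · convert hs₁ using 1
      funext a
      rcases a with a | i
      · rfl
      · exact Subtype.ext (Fin.append_left b₁ b₂ i)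
    · convert hs₂ using 1
      funext a
      rcases a with a | i
      · rfl
      · exact Subtype.ext (Fin.append_right b₁ b₂ i)

lemma exists_basic_subset {φ : L.Formula (Fin n)} {U : Set (SheafPt (α := α) T φ)}
    (hU : IsOpen U) :
    ∀ p ∈ U, ∃ (m : ℕ) (ψ : L.Formula (Fin n ⊕ Fin m)) (b : Fin m → α),
      p ∈ sheafBasic φ ψ b ∧ sheafBasic φ ψ b ⊆ U := by
  have hG : TopologicalSpace.GenerateOpen
      {V | ∃ (m : ℕ) (ψ : L.Formula (Fin n ⊕ Fin m)) (b : Fin m → α),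
        V = sheafBasic φ ψ b} U := hU
  clear hU
  induction hG with
  | basic V hV =>
    obtain ⟨m, ψ, b, rfl⟩ := hV
    exact fun p hp => ⟨m, ψ, b, hp, subset_rfl⟩
  | univ =>
    intro p _
    refine ⟨0, ⊤, finZeroElim, ⟨fun i => i.elim0, ?_⟩, fun _ _ => trivial⟩
    letI := p.model.struc
    exact Formula.realize_top.mpr trivial
  | inter V W _ _ ihV ihW =>
    rintro p ⟨hpV, hpW⟩
    obtain ⟨m₁, ψ₁, b₁, h₁, h₁'⟩ := ihV p hpV
    obtain ⟨m₂, ψ₂, b₂, h₂, h₂'⟩ := ihW p hpW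
    refine ⟨m₁ + m₂,
      (ψ₁.relabel (Sum.map id (Fin.castAdd m₂))) ⊓ (ψ₂.relabel (Sum.map id (Fin.natAdd m₁))),
      Fin.append b₁ b₂, ?_, ?_⟩
    · rw [sheafBasic_inter ψ₁ ψ₂ b₁ b₂]; exact ⟨h₁, h₂⟩
    · rw [sheafBasic_inter ψ₁ ψ₂ b₁ b₂]
      exact fun q hq => ⟨h₁' hq.1, h₂' hq.2⟩
  | sUnion S _ ih =>
    rintro p ⟨V, hVS, hpV⟩
    obtain ⟨m, ψ, b, h1, h2⟩ := ih V hVS p hpV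
    exact ⟨m, ψ, b, h1, h2.trans (Set.subset_sUnion_of_mem hVS)⟩

/-- The formula expressing the equality pattern of the parameters `b`. -/
noncomputable def patternFormula {m : ℕ} (b : Fin m → α) : L.Formula (Fin n ⊕ Fin m) :=
  letI : DecidableEq α := Classical.decEq α
  BoundedFormula.iInf fun jk : Fin m × Fin m =>
    if b jk.1 = b jk.2
    then Term.equal (Term.var (Sum.inr jk.1)) (Term.var (Sum.inr jk.2))
    else Formula.not (Term.equal (Term.var (Sum.inr jk.1)) (Term.var (Sum.inr jk.2)))

lemma realize_patternFormula {M : Type*} [L.Structure M] {m : ℕ} {b : Fin m → α}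
    {v : Fin n ⊕ Fin m → M} :
    (patternFormula (L := L) (n := n) b).Realize v ↔
      ∀ j k : Fin m, (b j = b k ↔ v (Sum.inr j) = v (Sum.inr k)) := by
  letI : DecidableEq α := Classical.decEq α
  have : (patternFormula (L := L) (n := n) b).Realize v ↔
      ∀ jk : Fin m × Fin m, (b jk.1 = b jk.2 ↔ v (Sum.inr jk.1) = v (Sum.inr jk.2)) := by
    rw [Formula.Realize, patternFormula, BoundedFormula.realize_iInf]
    constructor
    · intro h jk
      have := h jk
      by_cases hb : b jk.1 = b jk.2
      · rw [if_pos hb] at this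
        rw [show BoundedFormula.Realize
            (Term.equal (Term.var (Sum.inr jk.1)) (Term.var (Sum.inr jk.2))) v default
            = (Term.equal (L := L) (Term.var (Sum.inr jk.1))
              (Term.var (Sum.inr jk.2))).Realize v from rfl, Formula.realize_equal] at this
        exact ⟨fun _ => this, fun _ => hb⟩
      · rw [if_neg hb] at this
        rw [show BoundedFormula.Realize
            (Formula.not (Term.equal (Term.var (Sum.inr jk.1)) (Term.var (Sum.inr jk.2)))) v
              default
            = (Formula.not (Term.equal (L := L) (Term.var (Sum.inr jk.1))
              (Term.var (Sum.inr jk.2)))).Realize v from rfl, Formula.realize_not,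
          Formula.realize_equal] at this
        exact ⟨fun hb' => absurd hb' hb, fun hv => absurd hv this⟩
    · intro h jk
      by_cases hb : b jk.1 = b jk.2
      · rw [if_pos hb]
        exact Formula.realize_equal.mpr ((h jk).mp hb)
      · rw [if_neg hb]
        exact Formula.realize_not.mpr (fun hv => hb ((h jk).mpr (by
          rwa [Formula.realize_equal] at hv)))
    
  rw [this]
  exact ⟨fun h j k => h (j, k), fun h jk => h jk.1 jk.2⟩

/-- The formula `φ(x⃗) ∧ ∃y⃗ (ψ(x⃗,y⃗) ∧ pattern(y⃗))`. -/
noncomputable def witnessFormula {m : ℕ} (ψ : L.Formula (Fin n ⊕ Fin m)) (b : Fin m → α)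
    (φ : L.Formula (Fin n)) : L.Formula (Fin n) :=
  φ ⊓ Formula.iExs (Fin m) (ψ ⊓ patternFormula b)

lemma realize_witnessFormula {M : Type*} [L.Structure M] {m : ℕ}
    {ψ : L.Formula (Fin n ⊕ Fin m)} {b : Fin m → α} {φ : L.Formula (Fin n)}
    {v : Fin n → M} :
    (witnessFormula ψ b φ).Realize v ↔ φ.Realize v ∧ ∃ i : Fin m → M,
      ψ.Realize (Sum.elim v i) ∧ ∀ j k : Fin m, (b j = b k ↔ i j = i k) := by
  rw [witnessFormula, Formula.realize_inf, Formula.realize_iExs]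
  refine and_congr_right fun _ => ?_
  constructor
  · rintro ⟨i, hi⟩
    have hi' : (ψ ⊓ patternFormula b).Realize (Sum.elim v i) := hi
    rw [Formula.realize_inf] at hi'
    exact ⟨i, hi'.1, fun j k => (realize_patternFormula.mp hi'.2 j k)⟩
  · rintro ⟨i, h1, h2⟩
    refine ⟨i, ?_⟩
    show (ψ ⊓ patternFormula b).Realize (Sum.elim v i)
    rw [Formula.realize_inf]
    exact ⟨h1, realize_patternFormula.mpr fun j k => h2 j k⟩

end Helpers

section Helpers2

open Cardinal

variable {T : L.Theory} {n : ℕ}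

/-- Any small model can be replaced by an isomorphic one in which a prescribed finite tuple
of elements is moved to prescribed positions in `α`, provided the equality patterns match. -/
lemma exists_iso_moving (N : SmallModel L α T) {m : ℕ}
    (b : Fin m → α) (e : Fin m → N.carrier)
    (hpat : ∀ j k, ((e j : α) = (e k : α) ↔ b j = b k)) :
    ∃ (N' : SmallModel L α T) (f : StrEquiv N N'),
      ∀ j, (StrEquiv.fn f (e j) : α) = b j := by
  classical
  set E : Set α := Set.range (fun j => (e j : α)) with hE
  set B : Set α := Set.range b with hB
  have hEsub : E ⊆ N.carrier := by rintro x ⟨j, rfl⟩; exact (e j).2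
  have hEB : #E = #B := by
    refine Cardinal.mk_congr (Equiv.ofBijective
      (fun x => (⟨b x.2.choose, Set.mem_range_self _⟩ : B)) ⟨?_, ?_⟩)
    · rintro x y hxy
      have hb : b x.2.choose = b y.2.choose := Subtype.ext_iff.mp hxy
      have h1 : (e x.2.choose : α) = x := x.2.choose_spec
      have h2 : (e y.2.choose : α) = y := y.2.choose_spec
      have := (hpat _ _).mpr hb
      rw [h1, h2] at this
      exact Subtype.ext this
    · rintro ⟨y, hy⟩
      obtain ⟨j, hj⟩ := hy
      refine ⟨⟨(e j : α), ⟨j, rfl⟩⟩, Subtype.ext ?_⟩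
      have hmem : ((e j : α)) ∈ E := ⟨j, rfl⟩
      have : (e hmem.choose : α) = (e j : α) := hmem.choose_spec
      show b hmem.choose = y
      rw [(hpat _ _).mp this, hj]
  have hEfin : #E < Cardinal.aleph0 := (Set.finite_range _).lt_aleph0
  have hle : #(N.carrier \ E : Set α) ≤ #(Bᶜ : Set α) := by
    have h1 : #(N.carrier \ E : Set α) + #E = #N.carrier := Cardinal.mk_diff_add_mk hEsub
    have h3 : #N.carrier ≤ #α := Cardinal.mk_set_le _
    have key : #(N.carrier \ E : Set α) + #E ≤ #(Bᶜ : Set α) + #E := by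
      calc #(N.carrier \ E : Set α) + #E = #N.carrier := h1
        _ ≤ #α := h3
        _ = #B + #(Bᶜ : Set α) := (Cardinal.mk_sum_compl B).symm
        _ = #(Bᶜ : Set α) + #E := by rw [add_comm, hEB]
    exact (Cardinal.add_le_add_iff_of_lt_aleph0 hEfin).mp key
  obtain ⟨ι⟩ := (Cardinal.le_def _ _).mp hle
  let f0 : N.carrier → α := fun x =>
    if h : (x : α) ∈ E then b h.choose else (ι ⟨x, x.2, h⟩ : α)
  have hf0e : ∀ j, f0 (e j) = b j := by
    intro j
    have hmem : ((e j : α)) ∈ E := ⟨j, rfl⟩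
    have h1 : f0 (e j) = b hmem.choose := dif_pos hmem
    rw [h1]
    exact (hpat _ _).mp hmem.choose_spec
  have hinj : Function.Injective f0 := by
    intro x y hxy
    by_cases hx : (x : α) ∈ E <;> by_cases hy : (y : α) ∈ E
    · rw [show f0 x = b hx.choose from dif_pos hx, show f0 y = b hy.choose from dif_pos hy]
        at hxy
      have := (hpat _ _).mpr hxy
      have h1 : (e hx.choose : α) = (x : α) := hx.choose_spec
      have h2 : (e hy.choose : α) = (y : α) := hy.choose_spec
      rw [h1, h2] at this
      exact Subtype.ext this
    · exfalso
      rw [show f0 x = b hx.choose from dif_pos hx, show f0 y = (ι ⟨y, y.2, hy⟩ : α) from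
        dif_neg hy] at hxy
      exact (ι ⟨y, y.2, hy⟩).2 ⟨hx.choose, hxy⟩
    · exfalso
      rw [show f0 y = b hy.choose from dif_pos hy, show f0 x = (ι ⟨x, x.2, hx⟩ : α) from
        dif_neg hx] at hxy
      exact (ι ⟨x, x.2, hx⟩).2 ⟨hy.choose, hxy.symm⟩
    · rw [show f0 x = (ι ⟨x, x.2, hx⟩ : α) from dif_neg hx,
        show f0 y = (ι ⟨y, y.2, hy⟩ : α) from dif_neg hy] at hxy
      have h1 := ι.injective (Subtype.ext hxy)
      have h2 : (x : α) = (y : α) := Subtype.mk_eq_mk.mp h1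
      exact Subtype.ext h2
  let e0 : N.carrier ≃ Set.range f0 := Equiv.ofInjective f0 hinj
  letI := N.struc
  letI S' : L.Structure (Set.range f0) := Equiv.inducedStructure (L := L) e0
  haveI := N.models
  have hmod : @FirstOrder.Language.Theory.Model L (Set.range f0) S' T :=
    StrongHomClass.theory_model (Equiv.inducedStructureEquiv (L := L) e0)
  refine ⟨⟨Set.range f0, S', hmod⟩, Equiv.inducedStructureEquiv (L := L) e0, fun j => ?_⟩
  show ((e0 (e j) : Set.range f0) : α) = b j
  simp only [e0, Equiv.ofInjective_apply]
  exact hf0e j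

lemma mem_defSub_of_mem_sheafBasic {φ : L.Formula (Fin n)} {m : ℕ}
    {ψ : L.Formula (Fin n ⊕ Fin m)} {b : Fin m → α} {p : SheafPt (α := α) T φ}
    (hp : p ∈ sheafBasic φ ψ b) : p ∈ defSub (α := α) φ (witnessFormula ψ b φ) := by
  obtain ⟨h, hs⟩ := hp
  letI := p.model.struc
  show p.model.Sat (witnessFormula ψ b φ) p.elem
  rw [SmallModel.sat_iff, realize_witnessFormula]
  refine ⟨p.sat, fun j => ⟨b j, h j⟩, hs, fun j k => ?_⟩
  exact ⟨fun hb => Subtype.ext hb, fun hb => congrArg Subtype.val hb⟩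

lemma defSub_subset {φ : L.Formula (Fin n)} {U : Set (SheafPt (α := α) T φ)}
    (hstable : ∀ q : ActionPt (α := α) T φ, q.pt ∈ U → theta φ q ∈ U) {m : ℕ}
    (ψ : L.Formula (Fin n ⊕ Fin m)) (b : Fin m → α)
    (hsub : sheafBasic φ ψ b ⊆ U) :
    defSub (α := α) φ (witnessFormula ψ b φ) ⊆ U := by
  rintro ⟨N, d, hd⟩ hmem
  letI := N.struc
  have hmem' : N.Sat (witnessFormula ψ b φ) d := hmem
  rw [SmallModel.sat_iff, realize_witnessFormula] at hmem'
  obtain ⟨-, i, hψ, hpat⟩ := hmem'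
  obtain ⟨N', f, hf⟩ := exists_iso_moving N b i
    (fun j k => Subtype.ext_iff.symm.trans (hpat j k).symm)
  letI := N'.struc
  set g : ModelIso L α T := ⟨N, N', f⟩ with hg
  set q : ActionPt (α := α) T φ := ⟨g, d, hd⟩ with hq
  have hb : ∀ j, b j ∈ N'.carrier := fun j => by
    rw [← hf j]; exact (StrEquiv.fn f (i j)).2
  have htq : theta φ q ∈ sheafBasic φ ψ b := by
    refine ⟨hb, ?_⟩
    rw [SmallModel.sat_iff]
    have hval : (Sum.elim (theta φ q).elem fun j => (⟨b j, hb j⟩ : N'.carrier))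
        = ⇑f ∘ Sum.elim d i := by
      funext a
      rcases a with a | j
      · rfl
      · exact Subtype.ext (hf j).symm
    have := (StrongHomClass.realize_formula f ψ).mpr hψ
    rw [← hval] at this
    exact this
  exact mem_of_theta_mem hstable q (hsub htq)

end Helpers2

/-- **Stable opens are unions of definable subsets**: every open subset of `⟦φ⟧` that is
stable under the action `θ_φ` is a union of definable subsets `⟦ξ⟧`. -/
theorem stable_open_iUnion_defSub {T : L.Theory} {n : ℕ} (φ : L.Formula (Fin n))
    (U : Set (SheafPt (α := α) T φ)) (hU : IsOpen U)
    (hstable : ∀ q : ActionPt (α := α) T φ, q.pt ∈ U → theta φ q ∈ U) :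
    ∃ s : Set (L.Formula (Fin n)),
      (∀ ξ ∈ s, ∀ (M : SmallModel L α T) (v : Fin n → M.carrier), M.Sat ξ v → M.Sat φ v) ∧
      U = ⋃ ξ ∈ s, defSub (α := α) φ ξ := by
  classical
  refine ⟨{ξ | (∀ (M : SmallModel L α T) (v : Fin n → M.carrier), M.Sat ξ v → M.Sat φ v) ∧
      defSub (α := α) φ ξ ⊆ U}, fun ξ hξ => hξ.1, ?_⟩
  apply Set.Subset.antisymm
  · intro p hp
    obtain ⟨m, ψ, b, hpb, hbU⟩ := exists_basic_subset hU p hp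
    refine Set.mem_iUnion₂.mpr ⟨witnessFormula ψ b φ,
      ⟨fun M v hv => ?_, defSub_subset hstable ψ b hbU⟩, mem_defSub_of_mem_sheafBasic hpb⟩
    letI := M.struc
    rw [SmallModel.sat_iff, realize_witnessFormula] at hv
    exact hv.1
  · intro p hp
    obtain ⟨ξ, hξ, hpξ⟩ := Set.mem_iUnion₂.mp hp
    exact hξ.2 hpξ
end

section
/- For any equivariant sheaf (r : R → X_T, ρ) on the topological groupoid G_T ⇉ X_T, the action ρ : G_T ×_{X_T} R → R is an open map; consequently, for any open subset U ⊆ R, its stabilization {ρ((M,N,f), x) | x ∈ U, (M,N,f) ∈ G_T, r(x) = M} is an open subset of R. -/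
open FirstOrder FirstOrder.Language Set Topology

universe u v w x

variable {L : FirstOrder.Language.{u, v}} {α : Type w}

/-- An equivariant sheaf `(r : R → X_T, ρ)` on the topological groupoid `G_T ⇉ X_T`:
a local homeomorphism `r` into `X_T` together with a continuous action `ρ` of `G_T`. -/
structure EquivSheaf (L : FirstOrder.Language.{u, v}) (α : Type w) (T : L.Theory) where
  /-- The total space. -/
  R : Type x
  [topR : TopologicalSpace R]
  /-- The projection to the space of models. -/
  r : R → SmallModel L α T
  isLocalHomeomorph_r : IsLocalHomeomorph r
  /-- The action `ρ : G_T ×_{X_T} R → R`, defined on the set of pairs `((M,N,f), z)`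
  with `r z = M`, topologized as a subspace of the product. -/
  act : {q : ModelIso L α T × R // r q.2 = q.1.src} → R
  continuous_act : Continuous act
  r_act : ∀ q, r (act q) = q.1.1.tgt
  act_id : ∀ z : R, act ⟨(ModelIso.idIso (r z), z), rfl⟩ = z
  act_comp : ∀ (A B C : SmallModel L α T) (f : StrEquiv A B) (g : StrEquiv B C)
      (z : R) (hz : r z = A),
    act ⟨((⟨B, C, g⟩ : ModelIso L α T),
          act ⟨((⟨A, B, f⟩ : ModelIso L α T), z), hz⟩), r_act _⟩ =
      act ⟨((⟨A, C, StrEquiv.comp g f⟩ : ModelIso L α T), z), hz⟩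

attribute [instance] EquivSheaf.topR

/-- The stabilization of a subset of the total space of an equivariant sheaf under the
action of the groupoid. -/
def EquivSheaf.stabSet {T : L.Theory} (E : EquivSheaf L α T) (U : Set E.R) : Set E.R :=
  {y | ∃ q : {q : ModelIso L α T × E.R // E.r q.2 = q.1.src}, q.1.2 ∈ U ∧ E.act q = y}

/-! ### Auxiliary machinery -/

open Cardinal in
/-- Extend a finite compatible partial matching to an injection of a subset of `α` into `α`. -/
theorem exists_injective_extension {α : Type w} (C : Set α) {ι : Type*} [Finite ι]
    (s : ι → C) (t : ι → α) (hst : ∀ i j, (s i : α) = (s j : α) ↔ t i = t j) :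
    ∃ F : C → α, Function.Injective F ∧ ∀ i, F (s i) = t i := by
  classical
  set Sα : Set α := Set.range (fun i => (s i : α)) with hSα
  set T : Set α := Set.range t with hT
  have hSfin : Sα.Finite := Set.finite_range _
  have hTfin : T.Finite := Set.finite_range _
  -- bijection between Sα and T
  have hcard : (#Sα) = #T := by
    let u : ↥Sα → ↥T := fun x => ⟨t x.2.choose, Set.mem_range_self _⟩
    have hu : ∀ x : ↥Sα, ((s x.2.choose : α) = x.1) := fun x => x.2.choose_spec
    have uinj : Function.Injective u := by
      intro x y hxy
      have h1 : t x.2.choose = t y.2.choose := Subtype.ext_iff.1 hxy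
      have h2 : (s x.2.choose : α) = (s y.2.choose : α) := (hst _ _).2 h1
      exact Subtype.ext ((hu x).symm.trans (h2.trans (hu y)))
    have usurj : Function.Surjective u := by
      intro y
      obtain ⟨i, hi⟩ := y.2
      refine ⟨⟨(s i : α), Set.mem_range_self i⟩, ?_⟩
      apply Subtype.ext
      show t _ = y.1
      have : (s (Set.mem_range_self (f := fun i => (s i : α)) i).choose : α) = (s i : α) :=
        (Set.mem_range_self (f := fun i => (s i : α)) i).choose_spec
      rw [(hst _ _).1 this, hi]
    exact Cardinal.mk_congr (Equiv.ofBijective u ⟨uinj, usurj⟩)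
  -- cardinal inequality for complements
  have hle : (#(C \ Sα : Set α)) ≤ #(Tᶜ : Set α) := by
    have h1 : #(C \ Sα : Set α) + #Sα = #C := by
      have hsub : Sα ⊆ C := by rintro x ⟨i, rfl⟩; exact (s i).2
      exact Cardinal.mk_diff_add_mk hsub
    have h2 : #(Tᶜ : Set α) + #T = #(Set.univ : Set α) := by
      rw [Set.compl_eq_univ_diff]
      exact Cardinal.mk_diff_add_mk (Set.subset_univ T)
    have h3 : (#C) ≤ #(Set.univ : Set α) := by
      rw [Cardinal.mk_univ]; exact Cardinal.mk_set_le C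
    have h4 : #(C \ Sα : Set α) + #T ≤ #(Tᶜ : Set α) + #T := by
      rw [← hcard] at h2 ⊢
      calc #(C \ Sα : Set α) + #Sα = #C := h1
        _ ≤ #(Set.univ : Set α) := h3
        _ = #(Tᶜ : Set α) + #Sα := h2.symm
    exact (Cardinal.add_le_add_iff_of_lt_aleph0 (hTfin.lt_aleph0)).1 h4
  obtain ⟨j⟩ := Cardinal.le_def _ _ |>.1 hle
  -- define the extension
  refine ⟨fun x => if h : ∃ i, (s i : α) = ↑x then t h.choose
      else ↑(j ⟨↑x, x.2, fun hh => h (Set.mem_range.1 hh)⟩), ?_, ?_⟩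
  · intro x y hxy
    dsimp only at hxy
    by_cases hx : ∃ i, (s i : α) = ↑x <;> by_cases hy : ∃ i, (s i : α) = ↑y
    · rw [dif_pos hx, dif_pos hy] at hxy
      have := (hst _ _).2 hxy
      exact Subtype.ext (hx.choose_spec ▸ hy.choose_spec ▸ this)
    · rw [dif_pos hx, dif_neg hy] at hxy
      exact absurd (hxy ▸ (Set.mem_range_self (f := t) hx.choose)) (j _).2
    · rw [dif_neg hx, dif_pos hy] at hxy
      exact absurd (hxy.symm ▸ (Set.mem_range_self (f := t) hy.choose)) (j _).2
    · rw [dif_neg hx, dif_neg hy] at hxy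
      have h2 := j.injective (Subtype.ext hxy)
      exact Subtype.ext (Subtype.mk_eq_mk.1 h2)
  · intro i
    have h : ∃ i', (s i' : α) = ↑(s i) := ⟨i, rfl⟩
    dsimp only
    rw [dif_pos h]
    exact (hst _ _).1 h.choose_spec


section Aux

variable {T : L.Theory}

/-- The subbasis of the logical topology on `G_T`. -/
def GSub (L : FirstOrder.Language.{u, v}) (α : Type w) (T : L.Theory) :
    Set (Set (ModelIso L α T)) :=
  {U | ∃ (n : ℕ) (φ : L.Formula (Fin n)) (b : Fin n → α),
      U = ModelIso.src ⁻¹' XBasic φ b} ∪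
  {U | ∃ (n : ℕ) (φ : L.Formula (Fin n)) (b : Fin n → α),
      U = ModelIso.tgt ⁻¹' XBasic φ b} ∪
  {U | ∃ a b : α, U = GMapsTo (T := T) a b}

lemma ModelIso.topology_eq :
    (ModelIso.instTopologicalSpace : TopologicalSpace (ModelIso L α T)) =
      TopologicalSpace.generateFrom (GSub L α T) := rfl

lemma isOpen_XBasic {n : ℕ} (φ : L.Formula (Fin n)) (b : Fin n → α) :
    IsOpen (XBasic (T := T) φ b) :=
  TopologicalSpace.isOpen_generateFrom_of_mem ⟨n, φ, b, rfl⟩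

/-- Intersections of basic opens of `X_T` are basic. -/
lemma XBasic_inter {n m : ℕ} (φ : L.Formula (Fin n)) (b : Fin n → α)
    (ψ : L.Formula (Fin m)) (c : Fin m → α) :
    ∃ (p : ℕ) (θ : L.Formula (Fin p)) (e : Fin p → α),
      XBasic (T := T) φ b ∩ XBasic ψ c = XBasic θ e := by
  refine ⟨n + m,
    (φ.relabel fun i => finSumFinEquiv (Sum.inl i)) ⊓
      (ψ.relabel fun i => finSumFinEquiv (Sum.inr i)),
    fun i => Sum.elim b c (finSumFinEquiv.symm i), ?_⟩
  ext M
  letI := M.struc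
  simp only [Set.mem_inter_iff, XBasic, Set.mem_setOf_eq, SmallModel.Sat,
    Formula.realize_inf, Formula.realize_relabel]
  constructor
  · rintro ⟨⟨hb, hφ⟩, hc, hψ⟩
    have he : ∀ i, Sum.elim b c (finSumFinEquiv.symm i) ∈ M.carrier := by
      intro i
      rcases h : finSumFinEquiv.symm i with u | u
      · exact hb u
      · exact hc u
    refine ⟨he, ?_, ?_⟩
    · have h1 : ((fun i => (⟨Sum.elim b c (finSumFinEquiv.symm i), he i⟩ : M.carrier)) ∘
          fun i => finSumFinEquiv (Sum.inl i)) = fun i => ⟨b i, hb i⟩ :=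
        funext fun i => Subtype.ext (by simp)
      rw [h1]; exact hφ
    · have h1 : ((fun i => (⟨Sum.elim b c (finSumFinEquiv.symm i), he i⟩ : M.carrier)) ∘
          fun i => finSumFinEquiv (Sum.inr i)) = fun i => ⟨c i, hc i⟩ :=
        funext fun i => Subtype.ext (by simp)
      rw [h1]; exact hψ
  · rintro ⟨he, hφ, hψ⟩
    have hb : ∀ i, b i ∈ M.carrier := by
      intro i; simpa using he (finSumFinEquiv (Sum.inl i))
    have hc : ∀ i, c i ∈ M.carrier := by
      intro i; simpa using he (finSumFinEquiv (Sum.inr i))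
    refine ⟨⟨hb, ?_⟩, hc, ?_⟩
    · have h1 : ((fun i => (⟨Sum.elim b c (finSumFinEquiv.symm i), he i⟩ : M.carrier)) ∘
          fun i => finSumFinEquiv (Sum.inl i)) = fun i => ⟨b i, hb i⟩ :=
        funext fun i => Subtype.ext (by simp)
      rw [← h1]; exact hφ
    · have h1 : ((fun i => (⟨Sum.elim b c (finSumFinEquiv.symm i), he i⟩ : M.carrier)) ∘
          fun i => finSumFinEquiv (Sum.inr i)) = fun i => ⟨c i, hc i⟩ :=
        funext fun i => Subtype.ext (by simp)
      rw [← h1]; exact hψ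

lemma XBasic_top :
    XBasic (T := T) (⊤ : L.Formula (Fin 0)) (finZeroElim : Fin 0 → α) = Set.univ := by
  ext M
  simp only [XBasic, Set.mem_setOf_eq, Set.mem_univ, iff_true]
  exact ⟨fun i => i.elim0, by letI := M.struc; simp [SmallModel.Sat]⟩

/-- Normal form of a finite intersection of subbasic opens of `G_T`. -/
lemma sInter_normal_form {F : Set (Set (ModelIso L α T))} (hFfin : F.Finite)
    (hFsub : F ⊆ GSub L α T) :
    ∃ (n : ℕ) (φ : L.Formula (Fin n)) (c : Fin n → α) (m : ℕ) (ψ : L.Formula (Fin m))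
      (d : Fin m → α) (k : ℕ) (a b : Fin k → α),
      ⋂₀ F = ModelIso.src ⁻¹' XBasic φ c ∩ ModelIso.tgt ⁻¹' XBasic ψ d ∩
        {g | ∀ i, ∃ h : a i ∈ g.src.carrier, (StrEquiv.fn g.iso ⟨a i, h⟩ : α) = b i} := by
  revert hFsub
  refine Set.Finite.induction_on F hFfin ?_ ?_
  · intro _
    refine ⟨0, ⊤, finZeroElim, 0, ⊤, finZeroElim, 0, finZeroElim, finZeroElim, ?_⟩
    rw [Set.sInter_empty]
    ext g
    simp [XBasic_top]
  · intro s₀ F hnot hfin IH hFsub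
    have hFsub' : F ⊆ GSub L α T := fun u hu => hFsub (Set.mem_insert_of_mem _ hu)
    obtain ⟨n, φ, c, m, ψ, d, k, a, b, hIH⟩ := IH hFsub'
    have hs₀ := hFsub (Set.mem_insert _ _)
    rcases hs₀ with (⟨n0, φ0, c0, rfl⟩ | ⟨n0, φ0, c0, rfl⟩) | ⟨a0, b0, rfl⟩
    · obtain ⟨p, θ, e, hθ⟩ := XBasic_inter (T := T) φ0 c0 φ c
      refine ⟨p, θ, e, m, ψ, d, k, a, b, ?_⟩
      rw [Set.sInter_insert, hIH, ← hθ]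
      ext g
      simp only [Set.mem_inter_iff, Set.mem_preimage, Set.mem_setOf_eq]
      tauto
    · obtain ⟨p, θ, e, hθ⟩ := XBasic_inter (T := T) φ0 c0 ψ d
      refine ⟨n, φ, c, p, θ, e, k, a, b, ?_⟩
      rw [Set.sInter_insert, hIH, ← hθ]
      ext g
      simp only [Set.mem_inter_iff, Set.mem_preimage, Set.mem_setOf_eq]
      tauto
    · refine ⟨n, φ, c, m, ψ, d, k + 1, Fin.cons a0 a, Fin.cons b0 b, ?_⟩
      rw [Set.sInter_insert, hIH]
      ext g
      simp only [Set.mem_inter_iff, Set.mem_preimage, Set.mem_setOf_eq, GMapsTo]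
      constructor
      · rintro ⟨h0, ⟨hsrc, htgt⟩, hmaps⟩
        refine ⟨⟨hsrc, htgt⟩, fun i => ?_⟩
        refine Fin.cases ?_ ?_ i
        · simpa using h0
        · intro j; simpa using hmaps j
      · rintro ⟨⟨hsrc, htgt⟩, hmaps⟩
        refine ⟨by simpa using hmaps 0, ⟨hsrc, htgt⟩, fun j => by simpa using hmaps j.succ⟩

end Aux

/-! ### The key lemma: local sections of the source map through a canonical open set -/

section Key

variable {T : L.Theory}

lemma key_lemma {n m k : ℕ} (φ : L.Formula (Fin n)) (c : Fin n → α)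
    (ψ : L.Formula (Fin m)) (d : Fin m → α) (a b : Fin k → α) (g : ModelIso L α T)
    (hsrc : g.src ∈ XBasic φ c) (htgt : g.tgt ∈ XBasic ψ d)
    (hmaps : ∀ i, ∃ h : a i ∈ g.src.carrier, (StrEquiv.fn g.iso ⟨a i, h⟩ : α) = b i) :
    ∃ U : Set (SmallModel L α T), IsOpen U ∧ g.src ∈ U ∧
      ∀ M' ∈ U, ∃ g' : ModelIso L α T, g'.src = M' ∧ g'.src ∈ XBasic φ c ∧
        g'.tgt ∈ XBasic ψ d ∧
        ∀ i, ∃ h : a i ∈ g'.src.carrier, (StrEquiv.fn g'.iso ⟨a i, h⟩ : α) = b i := by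
  classical
  -- the pattern formulas
  set eqf : (Fin k ⊕ Fin m) → (Fin k ⊕ Fin m) → L.Formula (Fin k ⊕ Fin m) :=
    fun u v => Term.equal (Term.var u) (Term.var v) with heqf
  set pat1 : L.Formula (Fin k ⊕ Fin m) := BoundedFormula.iInf
    (fun jj : Fin m × Fin m => if d jj.1 = d jj.2 then eqf (Sum.inr jj.1) (Sum.inr jj.2)
      else (eqf (Sum.inr jj.1) (Sum.inr jj.2)).not) with hpat1
  set pat2 : L.Formula (Fin k ⊕ Fin m) := BoundedFormula.iInf
    (fun jl : Fin m × Fin k => if d jl.1 = b jl.2 then eqf (Sum.inr jl.1) (Sum.inl jl.2)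
      else (eqf (Sum.inr jl.1) (Sum.inl jl.2)).not) with hpat2
  set mat : L.Formula (Fin k ⊕ Fin m) := (ψ.relabel Sum.inr) ⊓ (pat1 ⊓ pat2) with hmat
  set χ : L.Formula (Fin k) := mat.iExs (Fin m) with hχ
  -- characterization of the realization of χ
  have hchi : ∀ (M' : SmallModel L α T) (ha : ∀ l, a l ∈ M'.carrier),
      M'.Sat χ (fun l => ⟨a l, ha l⟩) ↔
        ∃ i : Fin m → M'.carrier, M'.Sat ψ i ∧
          (∀ j j', ((i j : α) = (i j' : α) ↔ d j = d j')) ∧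
          (∀ j l, ((i j : α) = a l ↔ d j = b l)) := by
    intro M' ha
    letI := M'.struc
    have base : M'.Sat χ (fun l => ⟨a l, ha l⟩) ↔
        ∃ i : Fin m → M'.carrier,
          mat.Realize (fun u => Sum.elim (fun l => (⟨a l, ha l⟩ : M'.carrier)) i (id u)) :=
      Formula.realize_iExs
    rw [base]
    apply exists_congr
    intro i
    have hw : (fun u => Sum.elim (fun l => (⟨a l, ha l⟩ : M'.carrier)) i (id u)) =
        Sum.elim (fun l => (⟨a l, ha l⟩ : M'.carrier)) i := by
      funext u; simp
    rw [hw, hmat, Formula.realize_inf, Formula.realize_inf, Formula.realize_relabel]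
    have hψpart : (Sum.elim (fun l => (⟨a l, ha l⟩ : M'.carrier)) i ∘ Sum.inr) = i := rfl
    rw [hψpart]
    have hp1 : pat1.Realize (Sum.elim (fun l => (⟨a l, ha l⟩ : M'.carrier)) i) ↔
        ∀ j j', ((i j : α) = (i j' : α) ↔ d j = d j') := by
      rw [hpat1]
      show BoundedFormula.Realize _ _ _ ↔ _
      rw [BoundedFormula.realize_iInf]
      constructor
      · intro H j j'
        have := H (j, j')
        by_cases hd : d j = d j'
        · rw [if_pos hd] at this
          simp only [heqf, Formula.Realize, BoundedFormula.realize_bdEqual,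
            Term.realize_var] at this
          exact ⟨fun _ => hd, fun _ => congrArg Subtype.val this⟩
        · rw [if_neg hd] at this
          simp only [heqf, BoundedFormula.realize_not, Formula.Realize,
            BoundedFormula.realize_bdEqual, Term.realize_var] at this
          exact ⟨fun hij => absurd (Subtype.ext hij) this,
            fun hdd => absurd hdd hd⟩
      · intro H jj
        by_cases hd : d jj.1 = d jj.2
        · rw [if_pos hd]
          simp only [heqf, Formula.Realize, BoundedFormula.realize_bdEqual, Term.realize_var]
          exact Subtype.ext ((H jj.1 jj.2).2 hd)
        · rw [if_neg hd]
          simp only [heqf, BoundedFormula.realize_not, Formula.Realize,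
            BoundedFormula.realize_bdEqual, Term.realize_var]
          intro hc
          exact hd ((H jj.1 jj.2).1 (congrArg Subtype.val hc))
    have hp2 : pat2.Realize (Sum.elim (fun l => (⟨a l, ha l⟩ : M'.carrier)) i) ↔
        ∀ j l, ((i j : α) = a l ↔ d j = b l) := by
      rw [hpat2]
      show BoundedFormula.Realize _ _ _ ↔ _
      rw [BoundedFormula.realize_iInf]
      constructor
      · intro H j l
        have := H (j, l)
        by_cases hd : d j = b l
        · rw [if_pos hd] at this
          simp only [heqf, Formula.Realize, BoundedFormula.realize_bdEqual,
            Term.realize_var] at this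
          exact ⟨fun _ => hd, fun _ => congrArg Subtype.val this⟩
        · rw [if_neg hd] at this
          simp only [heqf, BoundedFormula.realize_not, Formula.Realize,
            BoundedFormula.realize_bdEqual, Term.realize_var] at this
          exact ⟨fun hij => absurd (Subtype.ext hij) this,
            fun hdd => absurd hdd hd⟩
      · intro H jl
        by_cases hd : d jl.1 = b jl.2
        · rw [if_pos hd]
          simp only [heqf, Formula.Realize, BoundedFormula.realize_bdEqual, Term.realize_var]
          exact Subtype.ext ((H jl.1 jl.2).2 hd)
        · rw [if_neg hd]
          simp only [heqf, BoundedFormula.realize_not, Formula.Realize,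
            BoundedFormula.realize_bdEqual, Term.realize_var]
          intro hc
          exact hd ((H jl.1 jl.2).1 (congrArg Subtype.val hc))
    rw [hp1, hp2]
    exact Iff.rfl

  -- data extracted from the given isomorphism g
  obtain ⟨hd, hψN⟩ := htgt
  have hamem : ∀ l, a l ∈ g.src.carrier := fun l => (hmaps l).choose
  have hfab : ∀ l, (StrEquiv.fn g.iso ⟨a l, hamem l⟩ : α) = b l := fun l => (hmaps l).choose_spec
  letI := g.src.struc
  letI := g.tgt.struc
  have hfab' : ∀ l, ((g.iso.toEquiv ⟨a l, hamem l⟩ : g.tgt.carrier) : α) = b l := hfab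
  have hab : ∀ l l', a l = a l' ↔ b l = b l' := by
    intro l l'
    constructor
    · intro h
      rw [← hfab' l, ← hfab' l']
      exact congrArg (fun z => (g.iso.toEquiv z : α)) (Subtype.ext h)
    · intro h
      have h2 : (g.iso.toEquiv ⟨a l, hamem l⟩ : g.tgt.carrier) = g.iso.toEquiv ⟨a l', hamem l'⟩ :=
        Subtype.ext (by rw [hfab' l, hfab' l', h])
      exact congrArg Subtype.val (g.iso.toEquiv.injective h2)
  refine ⟨XBasic (T := T) φ c ∩ XBasic χ a,
    (isOpen_XBasic _ _).inter (isOpen_XBasic _ _), ⟨hsrc, ?_⟩, ?_⟩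
  · -- the center g.src belongs to U
    refine ⟨hamem, ?_⟩
    rw [hchi g.src hamem]
    refine ⟨fun j => g.iso.toEquiv.symm ⟨d j, hd j⟩, ?_, ?_, ?_⟩
    · have h1 : (⇑g.iso ∘ fun j => g.iso.toEquiv.symm ⟨d j, hd j⟩) =
          fun j => (⟨d j, hd j⟩ : g.tgt.carrier) :=
        funext fun j => g.iso.toEquiv.apply_symm_apply _
      have h2 := StrongHomClass.realize_formula (L := L) g.iso (φ := ψ)
        (v := fun j => g.iso.toEquiv.symm ⟨d j, hd j⟩)
      exact h2.mp (by rw [h1]; exact hψN)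
    · intro j j'
      constructor
      · intro h
        have h1 : g.iso.toEquiv.symm ⟨d j, hd j⟩ = g.iso.toEquiv.symm ⟨d j', hd j'⟩ :=
          Subtype.ext h
        exact congrArg Subtype.val (g.iso.toEquiv.symm.injective h1)
      · intro h
        exact congrArg (fun z => (g.iso.toEquiv.symm z : α)) (Subtype.ext h)
    · intro j l
      constructor
      · intro h
        have h1 : g.iso.toEquiv.symm ⟨d j, hd j⟩ = ⟨a l, hamem l⟩ := Subtype.ext h
        have h2 : (⟨d j, hd j⟩ : g.tgt.carrier) = g.iso.toEquiv ⟨a l, hamem l⟩ := by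
          rw [← h1, g.iso.toEquiv.apply_symm_apply]
        have h3 := congrArg Subtype.val h2
        rw [hfab' l] at h3
        exact h3
      · intro h
        have h2 : (⟨d j, hd j⟩ : g.tgt.carrier) = g.iso.toEquiv ⟨a l, hamem l⟩ :=
          Subtype.ext (by rw [hfab' l]; exact h)
        have h1 : g.iso.toEquiv.symm ⟨d j, hd j⟩ = ⟨a l, hamem l⟩ := by
          rw [h2, Equiv.symm_apply_apply]
        exact congrArg Subtype.val h1
  · -- every model in U is the source of an isomorphism satisfying all conditions
    rintro M' ⟨hM'φ, haM, hSat⟩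
    rw [hchi M' haM] at hSat
    obtain ⟨i, hψi, hp1, hp2⟩ := hSat
    set sa : Fin k ⊕ Fin m → M'.carrier := Sum.elim (fun l => ⟨a l, haM l⟩) i with hsa
    have hst : ∀ u v, (sa u : α) = (sa v : α) ↔ Sum.elim b d u = Sum.elim b d v := by
      rintro (l | j) (l' | j') <;> simp only [hsa, Sum.elim_inl, Sum.elim_inr]
      · exact hab l l'
      · exact ⟨fun h => ((hp2 j' l).1 h.symm).symm, fun h => ((hp2 j' l).2 h.symm).symm⟩
      · exact hp2 j l'
      · exact hp1 j j'
    obtain ⟨F, Finj, hF⟩ := exists_injective_extension M'.carrier sa (Sum.elim b d) hst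
    letI := M'.struc
    let e' : M'.carrier ≃ ↥(Set.range F) := Equiv.ofInjective F Finj
    letI strucN : L.Structure ↥(Set.range F) := Equiv.inducedStructure e'
    letI : T.Model M'.carrier := M'.models
    have modelsN : @FirstOrder.Language.Theory.Model L ↥(Set.range F) strucN T :=
      StrongHomClass.theory_model (Equiv.inducedStructureEquiv (L := L) e')
    refine ⟨⟨M', ⟨Set.range F, strucN, modelsN⟩, Equiv.inducedStructureEquiv (L := L) e'⟩,
      rfl, hM'φ, ?_, ?_⟩
    · -- target condition
      have hdN : ∀ j, d j ∈ Set.range F := fun j => ⟨i j, hF (Sum.inr j)⟩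
      refine ⟨hdN, ?_⟩
      have hcoe : (⇑(Equiv.inducedStructureEquiv (L := L) e') ∘ i) =
          fun j => (⟨d j, hdN j⟩ : ↥(Set.range F)) := by
        funext j
        apply Subtype.ext
        show ((Equiv.inducedStructureEquiv (L := L) e') (i j) : α) = d j
        rw [Equiv.toFun_inducedStructureEquiv]
        exact hF (Sum.inr j)
      have h2 := StrongHomClass.realize_formula (L := L)
        (Equiv.inducedStructureEquiv (L := L) e') (φ := ψ) (v := i)
      rw [hcoe] at h2
      exact h2.mpr hψi
    · -- the maps-to conditions
      intro l
      refine ⟨haM l, ?_⟩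
      show (((Equiv.inducedStructureEquiv (L := L) e').toEquiv ⟨a l, haM l⟩ :
        ↥(Set.range F)) : α) = b l
      rw [Equiv.toEquiv_inducedStructureEquiv]
      exact hF (Sum.inl l)

end Key


/-! ### The groupoid structure and the openness argument -/

section Groupoid

variable {T : L.Theory}

lemma isOpen_GSub {s : Set (ModelIso L α T)} (hs : s ∈ GSub L α T) : IsOpen s :=
  TopologicalSpace.isOpen_generateFrom_of_mem hs

lemma invIso_preimage_GMapsTo (a b : α) :
    ModelIso.invIso ⁻¹' (GMapsTo (T := T) a b) = GMapsTo b a := by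
  ext g
  letI := g.src.struc
  letI := g.tgt.struc
  simp only [Set.mem_preimage, GMapsTo, Set.mem_setOf_eq]
  show (∃ h : a ∈ g.tgt.carrier, ((g.iso.toEquiv.symm ⟨a, h⟩ : g.src.carrier) : α) = b) ↔
    (∃ h : b ∈ g.src.carrier, ((g.iso.toEquiv ⟨b, h⟩ : g.tgt.carrier) : α) = a)
  constructor
  · rintro ⟨h, hab⟩
    refine ⟨hab ▸ (g.iso.toEquiv.symm ⟨a, h⟩).2, ?_⟩
    have h1 : (⟨b, hab ▸ (g.iso.toEquiv.symm ⟨a, h⟩).2⟩ : g.src.carrier) =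
        g.iso.toEquiv.symm ⟨a, h⟩ := Subtype.ext hab.symm
    rw [h1, g.iso.toEquiv.apply_symm_apply]
  · rintro ⟨h, hab⟩
    refine ⟨hab ▸ (g.iso.toEquiv ⟨b, h⟩).2, ?_⟩
    have h1 : (⟨a, hab ▸ (g.iso.toEquiv ⟨b, h⟩).2⟩ : g.tgt.carrier) =
        g.iso.toEquiv ⟨b, h⟩ := Subtype.ext hab.symm
    rw [h1, g.iso.toEquiv.symm_apply_apply]

lemma continuous_invIso : Continuous (ModelIso.invIso : ModelIso L α T → ModelIso L α T) := by
  apply continuous_generateFrom_iff.mpr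
  rintro s ((⟨n, φ, b, rfl⟩ | ⟨n, φ, b, rfl⟩) | ⟨a, b, rfl⟩)
  · have h1 : (ModelIso.invIso ⁻¹' (ModelIso.src ⁻¹' XBasic (T := T) φ b)) =
        ModelIso.tgt ⁻¹' XBasic φ b := rfl
    rw [h1]
    exact isOpen_GSub (Or.inl (Or.inr ⟨n, φ, b, rfl⟩))
  · have h1 : (ModelIso.invIso ⁻¹' (ModelIso.tgt ⁻¹' XBasic (T := T) φ b)) =
        ModelIso.src ⁻¹' XBasic φ b := rfl
    rw [h1]
    exact isOpen_GSub (Or.inl (Or.inl ⟨n, φ, b, rfl⟩))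
  · rw [invIso_preimage_GMapsTo]
    exact isOpen_GSub (Or.inr ⟨b, a, rfl⟩)

lemma EquivSheaf.act_inv (E : EquivSheaf.{u, v, w, x} L α T) (A B : SmallModel L α T)
    (f : StrEquiv A B) (x : E.R) (h : E.r x = A) :
    E.act ⟨((⟨A, B, f⟩ : ModelIso L α T).invIso, E.act ⟨((⟨A, B, f⟩ : ModelIso L α T), x), h⟩),
      E.r_act _⟩ = x := by
  letI := A.struc
  letI := B.struc
  have hcomp : StrEquiv.comp (T := T) (A := A) (B := B) (C := A) f.symm f =
      Language.Equiv.refl L A.carrier := Language.Equiv.symm_comp_self f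
  have h1 := E.act_comp A B A f f.symm x h
  rw [hcomp] at h1
  have h2 : E.act ⟨((⟨A, A, Language.Equiv.refl L A.carrier⟩ : ModelIso L α T), x), h⟩ = x := by
    subst h
    exact E.act_id x
  exact h1.trans h2

end Groupoid

/-- **The action of an equivariant sheaf is open**: for any equivariant sheaf
`(r : R → X_T, ρ)` on `G_T ⇉ X_T`, the action `ρ : G_T ×_{X_T} R → R` is an open map;
consequently the stabilization of any open subset of `R` is open. -/
theorem equivSheaf_act_isOpenMap {T : L.Theory} (E : EquivSheaf.{u, v, w, x} L α T) :
    IsOpenMap E.act ∧ ∀ U : Set E.R, IsOpen U → IsOpen (E.stabSet U) := by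
  classical
  have hrc : Continuous E.r := E.isLocalHomeomorph_r.continuous
  -- the involution τ of the fiber product
  let τ : {q : ModelIso L α T × E.R // E.r q.2 = q.1.src} →
      {q : ModelIso L α T × E.R // E.r q.2 = q.1.src} :=
    fun q => ⟨(q.1.1.invIso, E.act q), E.r_act q⟩
  have hττ : ∀ q, τ (τ q) = q := by
    rintro ⟨⟨⟨A, B, f⟩, x⟩, h⟩
    apply Subtype.ext
    have h1 : (⟨A, B, f⟩ : ModelIso L α T).invIso.invIso = ⟨A, B, f⟩ := by
      letI := A.struc
      letI := B.struc
      show (⟨A, B, f.symm.symm⟩ : ModelIso L α T) = ⟨A, B, f⟩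
      rw [Language.Equiv.symm_symm]
    have h2 := E.act_inv A B f x h
    exact Prod.ext h1 h2
  have hτc : Continuous τ := by
    apply Continuous.subtype_mk
    exact (continuous_invIso.comp (continuous_fst.comp continuous_subtype_val)).prodMk
      E.continuous_act
  have hτopen : IsOpenMap τ := by
    intro P hP
    have himg : τ '' P = τ ⁻¹' P := by
      ext q
      constructor
      · rintro ⟨p, hp, rfl⟩
        show τ (τ p) ∈ P
        rw [hττ]
        exact hp
      · intro hq
        exact ⟨τ q, hq, hττ q⟩
    rw [himg]
    exact hP.preimage hτc
  -- the second projection of the fiber product is open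
  have hpr2 : IsOpenMap (fun q : {q : ModelIso L α T × E.R // E.r q.2 = q.1.src} => q.1.2) := by
    intro P hP
    rw [isOpen_iff_forall_mem_open]
    rintro x₀ ⟨q₀, hq₀P, rfl⟩
    obtain ⟨P', hP', hPeq⟩ := isOpen_induced_iff.1 hP
    have hq₀' : q₀.1 ∈ P' := by
      rw [← hPeq] at hq₀P
      exact hq₀P
    obtain ⟨Ω, V, hΩ, hV, hgΩ, hxV, hΩV⟩ := isOpen_prod_iff.1 hP' q₀.1.1 q₀.1.2 hq₀'
    have hbasis := TopologicalSpace.isTopologicalBasis_of_subbasis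
      (s := GSub L α T) (ModelIso.topology_eq)
    obtain ⟨B, hBmem, hgB, hBΩ⟩ := hbasis.exists_subset_of_mem_open hgΩ hΩ
    obtain ⟨F, ⟨hFfin, hFsub⟩, rfl⟩ := hBmem
    obtain ⟨n, φ, c, m, ψ, d, k, a, b, hcanon⟩ := sInter_normal_form hFfin hFsub
    have hg₀ := hgB
    dsimp only at hg₀ hBΩ
    rw [hcanon] at hg₀
    obtain ⟨⟨hsrc, htgt⟩, hmaps⟩ := hg₀
    obtain ⟨U, hUopen, hUsrc, hUkey⟩ := key_lemma φ c ψ d a b q₀.1.1 hsrc htgt hmaps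
    refine ⟨V ∩ E.r ⁻¹' U, ?_, hV.inter (hUopen.preimage hrc), hxV, ?_⟩
    · rintro x' ⟨hx'V, hx'U⟩
      obtain ⟨g', hg'src, h1, h2, h3⟩ := hUkey (E.r x') hx'U
      have hg'B : g' ∈ ⋂₀ F := by
        rw [hcanon]
        exact ⟨⟨h1, h2⟩, h3⟩
      refine ⟨⟨(g', x'), hg'src.symm⟩, ?_, rfl⟩
      show (⟨(g', x'), hg'src.symm⟩ : {q : ModelIso L α T × E.R // E.r q.2 = q.1.src}) ∈ P
      rw [← hPeq]
      exact hΩV ⟨hBΩ (hg'B), hx'V⟩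
    · show E.r q₀.1.2 ∈ U
      rw [q₀.2]
      exact hUsrc
  have hact : IsOpenMap E.act := by
    have hcomp : E.act = (fun q : {q : ModelIso L α T × E.R // E.r q.2 = q.1.src} => q.1.2) ∘ τ := by
      funext q
      rfl
    rw [hcomp]
    exact hpr2.comp hτopen
  refine ⟨hact, fun U hU => ?_⟩
  have hstab : E.stabSet U =
      E.act '' {q : {q : ModelIso L α T × E.R // E.r q.2 = q.1.src} | q.1.2 ∈ U} := rfl
  rw [hstab]
  exact hact _ (hU.preimage (continuous_snd.comp continuous_subtype_val))
end
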